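/- If h and k are positive, coprime integers of opposite parity (i.e., h + k is odd), then T(h,k) = 1. -/

import Mathlib

/-- `T(h,k) := ∑_{j=1}^{2k-1} (-1)^{j+1+⌊hj/k⌋}`. -/
def Tpair (h k : ℕ) : ℤ := ∑ j ∈ Finset.Icc 1 (2 * k - 1), (-1 : ℤ) ^ (j + 1 + h * j / k)

lemma negpow_add (a b : ℕ) (hab : Odd (a + b)) : (-1 : ℤ) ^ a + (-1 : ℤ) ^ b = 0 := by
  rcases Nat.even_or_odd a with ha | ha
  · have hb : Odd b := by
      rcases ha with ⟨c, hc⟩; rcases hab with ⟨d, hd⟩; exact ⟨d - c, by omega⟩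
    rw [ha.neg_one_pow, hb.neg_one_pow]; ring
  · have hb : Even b := by
      rcases ha with ⟨c, hc⟩; rcases hab with ⟨d, hd⟩; exact ⟨d - c, by omega⟩
    rw [ha.neg_one_pow, hb.neg_one_pow]; ring

lemma eq_of_dvd_between (k s : ℕ) (hk : 0 < k) (hdvd : k ∣ s) (h1 : 0 < s)
    (h2 : s < 2 * k) : s = k := by
  have hks : k ≤ s := Nat.le_of_dvd h1 hdvd
  have hd2 : k ∣ s - k := Nat.dvd_sub hdvd dvd_rfl
  have := Nat.eq_zero_of_dvd_of_lt hd2 (by omega)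
  omega

theorem stmt_13 (h k : ℕ) (hh : 0 < h) (hk : 0 < k) (hcop : Nat.Coprime h k)
    (hpar : Odd (h + k)) : Tpair h k = 1 := by
  have hkmem : k ∈ Finset.Icc 1 (2 * k - 1) := by
    simp only [Finset.mem_Icc]; omega
  unfold Tpair
  rw [← Finset.add_sum_erase _ _ hkmem]
  have hfk : (-1 : ℤ) ^ (k + 1 + h * k / k) = 1 := by
    rw [Nat.mul_div_cancel h hk]
    apply Even.neg_one_pow
    rcases hpar with ⟨m, hm⟩; exact ⟨m + 1, by omega⟩
  rw [hfk]
  have hzero : ∑ j ∈ (Finset.Icc 1 (2 * k - 1)).erase k,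
      (-1 : ℤ) ^ (j + 1 + h * j / k) = 0 := by
    apply Finset.sum_involution (fun j _ => 2 * k - j)
    · intro j hj
      simp only [Finset.mem_erase, Finset.mem_Icc] at hj
      obtain ⟨hjk, hj1, hj2⟩ := hj
      -- k does not divide h * j
      have hnd : ¬ k ∣ h * j := by
        intro hd
        have hkj : k ∣ j := (Nat.Coprime.dvd_of_dvd_mul_left hcop.symm) hd
        have := eq_of_dvd_between k j hk hkj (by omega) (by omega)
        omega
      set a := h * j with ha
      set b := h * (2 * k - j) with hb
      have hab : a + b = 2 * h * k := by
        rw [ha, hb, ← Nat.mul_add]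
        have : j + (2 * k - j) = 2 * k := by omega
        rw [this]; ring
      have hmod0 : (a + b) % k = 0 := by
        rw [hab]; exact Nat.mul_mod_left (2 * h) k
      rw [Nat.add_mod] at hmod0
      have hdvds : k ∣ a % k + b % k := Nat.dvd_of_mod_eq_zero hmod0
      have ha1 : a % k < k := Nat.mod_lt _ hk
      have hb1 : b % k < k := Nat.mod_lt _ hk
      have ha0 : a % k ≠ 0 := fun hz => hnd (Nat.dvd_of_mod_eq_zero hz)
      have hmodsum : a % k + b % k = k :=
        eq_of_dvd_between k _ hk hdvds (by omega) (by omega)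
      have hdiv : (a + b) / k = 2 * h := by
        rw [hab]; exact Nat.mul_div_cancel _ hk
      rw [Nat.add_div hk, if_pos (le_of_eq hmodsum.symm)] at hdiv
      apply negpow_add
      exact ⟨k + h, by omega⟩
    · intro j hj _
      simp only [Finset.mem_erase, Finset.mem_Icc] at hj
      omega
    · intro j hj
      simp only [Finset.mem_erase, Finset.mem_Icc] at hj ⊢
      omega
    · intro j hj
      simp only [Finset.mem_erase, Finset.mem_Icc] at hj
      omega
  rw [hzero, add_zero]
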